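/- Let q be a prime power, let F_q be a finite field with q elements, and let n, k, t, λ be positive integers with 1 ≤ t < k < n and 1 ≤ λ ≤ [n−1−t choose k−t]_q. Then A_q(n,k,t;λ) ≤ ⌊((q^n − 1)/(q^{n−k} − 1)) · A_q(n−1, k, t; λ)⌋. -/

import Mathlib

open scoped Classical

/-- The Gaussian (q-ary) binomial coefficient `[m choose j]_q`,
`∏_{i=0}^{j-1} (q^{m-i} - 1) / (q^{j-i} - 1)` (the quotient is exact). -/
def gaussBinom (q m j : ℕ) : ℕ :=
  (∏ i ∈ Finset.range j, (q ^ (m - i) - 1)) / ∏ i ∈ Finset.range j, (q ^ (j - i) - 1)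

/-- `C` is a `t`-`(n,k,l)^m_q` multiple Grassmannian code: a set of
`k`-dimensional subspaces of `F^n` such that every `t`-dimensional subspace
of `F^n` is contained in at most `l` codewords. -/
def IsMultipleCode (F : Type*) [Field F] (n k t l : ℕ)
    (C : Finset (Submodule F (Fin n → F))) : Prop :=
  (∀ V ∈ C, Module.finrank F V = k) ∧
  ∀ T : Submodule F (Fin n → F), Module.finrank F T = t →
    (C.filter fun V => T ≤ V).card ≤ l

/-- `Aq F n k t l` is the maximum cardinality of a `t`-`(n,k,l)^m_q`
multiple Grassmannian code (no repeated codewords). -/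
noncomputable def Aq (F : Type*) [Field F] (n k t l : ℕ) : ℕ :=
  sSup {m | ∃ C : Finset (Submodule F (Fin n → F)), IsMultipleCode F n k t l C ∧ C.card = m}





set_option synthInstance.maxHeartbeats 400000
set_option maxHeartbeats 1000000
set_option linter.unusedSectionVars false
set_option linter.unusedVariables false

open Module Submodule Finset

section Aux

variable {F : Type} [Field F] [Fintype F]

theorem my_lines_count (W : Type) [AddCommGroup W] [Module F W] [Fintype W] :
    (Finset.univ.filter fun L : Submodule F W => finrank F L = 1).card * (Fintype.card F - 1)
      = Fintype.card F ^ finrank F W - 1 := by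
  classical
  have key : (Finset.univ.filter fun v : W => v ≠ 0).card
      = ∑ L ∈ Finset.univ.filter (fun L : Submodule F W => finrank F L = 1),
          ((Finset.univ.filter fun v : W => v ≠ 0).filter fun v => (F ∙ v) = L).card := by
    apply Finset.card_eq_sum_card_fiberwise
    intro v hv
    simp only [Finset.coe_filter, Finset.mem_coe, Finset.mem_filter, Finset.mem_univ, true_and, Set.mem_setOf_eq] at hv ⊢
    exact finrank_span_singleton hv
  have fib : ∀ L : Submodule F W, finrank F L = 1 →
      ((Finset.univ.filter fun v : W => v ≠ 0).filter fun v => (F ∙ v) = L).card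
        = Fintype.card F - 1 := by
    intro L hL
    have hset : ((Finset.univ.filter fun v : W => v ≠ 0).filter fun v => (F ∙ v) = L)
        = (Finset.univ.filter fun v : W => v ∈ L).erase 0 := by
      ext v
      simp only [Finset.mem_filter, Finset.mem_erase, Finset.mem_univ, true_and]
      constructor
      · rintro ⟨hv, rfl⟩
        exact ⟨hv, Submodule.mem_span_singleton_self v⟩
      · rintro ⟨hv, hvL⟩
        refine ⟨hv, ?_⟩
        have hle : (F ∙ v) ≤ L := (Submodule.span_singleton_le_iff_mem v L).mpr hvL
        exact Submodule.eq_of_le_of_finrank_eq hle (by rw [hL, finrank_span_singleton hv])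
    rw [hset, Finset.card_erase_of_mem (by simp)]
    have : (Finset.univ.filter fun v : W => v ∈ L).card = Fintype.card L := by
      rw [Fintype.card_subtype]
    rw [this, card_eq_pow_finrank (K := F), hL, pow_one]
  have lhs : (Finset.univ.filter fun v : W => v ≠ 0).card
      = Fintype.card F ^ finrank F W - 1 := by
    have : (Finset.univ.filter fun v : W => v ≠ 0) = Finset.univ.erase 0 := by
      ext v; simp
    rw [this, Finset.card_erase_of_mem (Finset.mem_univ 0), Finset.card_univ,
      card_eq_pow_finrank (K := F)]
  rw [← lhs, key, Finset.sum_congr rfl fun L hL => fib L (by simpa using hL)]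
  simp [mul_comm]

theorem my_finrank_dualAnn {W : Type} [AddCommGroup W] [Module F W] [FiniteDimensional F W]
    (H : Submodule F W) :
    finrank F H.dualAnnihilator = finrank F W - finrank F H := by
  have h1 : finrank F (W ⧸ H) = finrank F H.dualAnnihilator :=
    (Subspace.quotEquivAnnihilator H).finrank_eq
  have h2 := Submodule.finrank_quotient_add_finrank H
  omega

theorem my_hyps_count (W : Type) [AddCommGroup W] [Module F W] [Fintype W]
    (hd : 1 ≤ finrank F W) :
    (Finset.univ.filter fun H : Submodule F W => finrank F H = finrank F W - 1).card
        * (Fintype.card F - 1) = Fintype.card F ^ finrank F W - 1 := by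
  classical
  haveI : Finite (Module.Dual F W) :=
    Finite.of_injective _ (DFunLike.coe_injective (F := Module.Dual F W))
  haveI : Fintype (Module.Dual F W) := Fintype.ofFinite _
  have hbij : (Finset.univ.filter fun H : Submodule F W => finrank F H = finrank F W - 1).card
      = (Finset.univ.filter fun L : Submodule F (Module.Dual F W) => finrank F L = 1).card := by
    apply Finset.card_bij (fun H _ => H.dualAnnihilator)
    · intro H hH
      simp only [Finset.mem_filter, Finset.mem_univ, true_and] at hH ⊢
      rw [my_finrank_dualAnn, hH]
      omega
    · intro H1 h1 H2 h2 heq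
      exact le_antisymm
        (Subspace.dualAnnihilator_le_dualAnnihilator_iff.mp heq.ge)
        (Subspace.dualAnnihilator_le_dualAnnihilator_iff.mp heq.le)
    · intro L hL
      simp only [Finset.mem_filter, Finset.mem_univ, true_and] at hL
      have hle : L ≤ L.dualCoannihilator.dualAnnihilator := by
        intro φ hφ
        rw [Submodule.mem_dualAnnihilator]
        intro v hv
        rw [Submodule.mem_dualCoannihilator] at hv
        exact hv φ hφ
      have hfr : finrank F L.dualCoannihilator + finrank F L = finrank F W := by
        have := Subspace.finrank_add_finrank_dualCoannihilator_eq L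
        omega
      have hfr2 : finrank F L.dualCoannihilator.dualAnnihilator = finrank F L := by
        rw [my_finrank_dualAnn]
        omega
      have heq : L = L.dualCoannihilator.dualAnnihilator :=
        Submodule.eq_of_le_of_finrank_eq hle (by omega)
      refine ⟨L.dualCoannihilator, ?_, heq.symm⟩
      simp only [Finset.mem_filter, Finset.mem_univ, true_and]
      omega
  rw [hbij, my_lines_count (F := F) (Module.Dual F W), Subspace.dual_finrank_eq]

theorem my_finrank_map_mkQ {W : Type} [AddCommGroup W] [Module F W] [FiniteDimensional F W]
    (V H : Submodule F W) (hVH : V ≤ H) :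
    finrank F (H.map V.mkQ) + finrank F V = finrank F H := by
  have hr : LinearMap.range (V.mkQ.domRestrict H) = H.map V.mkQ := LinearMap.range_domRestrict _ _
  have hk : LinearMap.ker (V.mkQ.domRestrict H) = V.comap H.subtype := by
    ext x
    simp [LinearMap.mem_ker, Submodule.mem_comap, Submodule.Quotient.mk_eq_zero]
  have hrn := LinearMap.finrank_range_add_finrank_ker (V.mkQ.domRestrict H)
  rw [hr, hk] at hrn
  have hce : finrank F (V.comap H.subtype) = finrank F V :=
    (Submodule.comapSubtypeEquivOfLe hVH).finrank_eq
  rw [hce] at hrn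
  exact hrn

theorem my_hyps_over (n : ℕ) (V : Submodule F (Fin n → F)) (k : ℕ) (hk : finrank F V = k)
    (hkn : k < n) :
    (Finset.univ.filter fun H : Submodule F (Fin n → F) =>
        finrank F H = n - 1 ∧ V ≤ H).card * (Fintype.card F - 1)
      = Fintype.card F ^ (n - k) - 1 := by
  classical
  haveI : Finite ((Fin n → F) ⧸ V) := Quotient.finite _
  haveI : Fintype ((Fin n → F) ⧸ V) := Fintype.ofFinite _
  have hfM : finrank F (Fin n → F) = n := by simp
  have hfQ : finrank F ((Fin n → F) ⧸ V) = n - k := by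
    have := Submodule.finrank_quotient_add_finrank V
    omega
  have hbij : (Finset.univ.filter fun H : Submodule F (Fin n → F) =>
      finrank F H = n - 1 ∧ V ≤ H).card
      = (Finset.univ.filter fun S : Submodule F ((Fin n → F) ⧸ V) =>
          finrank F S = finrank F ((Fin n → F) ⧸ V) - 1).card := by
    apply Finset.card_bij (fun H _ => H.map V.mkQ)
    · intro H hH
      simp only [Finset.mem_filter, Finset.mem_univ, true_and] at hH ⊢
      have h1 := my_finrank_map_mkQ V H hH.2
      rw [hk, hH.1] at h1
      omega
    · intro H1 h1 H2 h2 heq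
      simp only [Finset.mem_filter, Finset.mem_univ, true_and] at h1 h2
      have e1 : (H1.map V.mkQ).comap V.mkQ = H1 := by
        rw [Submodule.comap_map_eq, Submodule.ker_mkQ, sup_eq_left.mpr h1.2]
      have e2 : (H2.map V.mkQ).comap V.mkQ = H2 := by
        rw [Submodule.comap_map_eq, Submodule.ker_mkQ, sup_eq_left.mpr h2.2]
      rw [← e1, ← e2, heq]
    · intro S hS
      simp only [Finset.mem_filter, Finset.mem_univ, true_and] at hS
      have hVle : V ≤ S.comap V.mkQ := by
        intro v hv
        simp [Submodule.mem_comap, (Submodule.Quotient.mk_eq_zero V).mpr hv]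
      have hmc : (S.comap V.mkQ).map V.mkQ = S := by
        rw [Submodule.map_comap_eq, Submodule.range_mkQ, top_inf_eq]
      refine ⟨S.comap V.mkQ, ?_, hmc⟩
      simp only [Finset.mem_filter, Finset.mem_univ, true_and]
      have h1 := my_finrank_map_mkQ V (S.comap V.mkQ) hVle
      rw [hmc, hS, hk] at h1
      refine ⟨?_, hVle⟩
      omega
  rw [hbij, my_hyps_count (F := F) ((Fin n → F) ⧸ V) (by omega), hfQ]

theorem my_map_map_symm {M N : Type} [AddCommGroup M] [Module F M] [AddCommGroup N] [Module F N]
    (e : M ≃ₗ[F] N) (X : Submodule F M) :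
    Submodule.map e.symm.toLinearMap (Submodule.map e.toLinearMap X) = X := by
  ext x
  simp only [Submodule.mem_map, LinearEquiv.coe_coe]
  constructor
  · rintro ⟨y, ⟨z, hz, rfl⟩, rfl⟩
    simpa using hz
  · intro hx
    exact ⟨e x, ⟨x, hx, rfl⟩, by simp⟩

theorem my_symm_map_map {M N : Type} [AddCommGroup M] [Module F M] [AddCommGroup N] [Module F N]
    (e : M ≃ₗ[F] N) (X : Submodule F N) :
    Submodule.map e.toLinearMap (Submodule.map e.symm.toLinearMap X) = X := by
  ext x
  simp only [Submodule.mem_map, LinearEquiv.coe_coe]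
  constructor
  · rintro ⟨y, ⟨z, hz, rfl⟩, rfl⟩
    simpa using hz
  · intro hx
    exact ⟨e.symm x, ⟨x, hx, rfl⟩, by simp⟩

theorem my_aq_bddAbove (n k t l : ℕ) :
    BddAbove {m | ∃ C : Finset (Submodule F (Fin n → F)),
      IsMultipleCode F n k t l C ∧ C.card = m} := by
  classical
  haveI : Fintype (Submodule F (Fin n → F)) := Fintype.ofFinite _
  refine ⟨Fintype.card (Submodule F (Fin n → F)), ?_⟩
  rintro m ⟨C, -, rfl⟩
  exact Finset.card_le_univ C

theorem my_restrict_le (n k t l : ℕ) (hn : 1 ≤ n) (C : Finset (Submodule F (Fin n → F)))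
    (hC : IsMultipleCode F n k t l C) (H : Submodule F (Fin n → F))
    (hH : finrank F H = n - 1) :
    (C.filter fun V => V ≤ H).card ≤ Aq F (n - 1) k t l := by
  classical
  have hfr : finrank F H = finrank F (Fin (n - 1) → F) := by simp [hH]
  obtain ⟨e⟩ := FiniteDimensional.nonempty_linearEquiv_of_finrank_eq hfr
  set Φ : Submodule F (Fin n → F) → Submodule F (Fin (n - 1) → F) :=
    fun V => (V.comap H.subtype).map e.toLinearMap with hΦ
  have hinj : Set.InjOn Φ ↑(C.filter fun V => V ≤ H) := by
    intro V1 h1 V2 h2 heq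
    simp only [Finset.coe_filter, Set.mem_setOf_eq, Finset.mem_filter] at h1 h2
    have hc : V1.comap H.subtype = V2.comap H.subtype := by
      have h' := congrArg (Submodule.map e.symm.toLinearMap) heq
      rwa [hΦ, my_map_map_symm, my_map_map_symm] at h'
    have m1 : (V1.comap H.subtype).map H.subtype = V1 := by
      rw [Submodule.map_comap_subtype, inf_eq_right.mpr h1.2]
    have m2 : (V2.comap H.subtype).map H.subtype = V2 := by
      rw [Submodule.map_comap_subtype, inf_eq_right.mpr h2.2]
    rw [← m1, ← m2, hc]
  have hiff : ∀ V ≤ H, ∀ T' : Submodule F (Fin (n - 1) → F),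
      (T' ≤ Φ V ↔ (T'.map e.symm.toLinearMap).map H.subtype ≤ V) := by
    intro V hV T'
    rw [Submodule.map_le_iff_le_comap, hΦ]
    constructor
    · intro h
      have h' := Submodule.map_mono (f := e.symm.toLinearMap) h
      rwa [my_map_map_symm] at h'
    · intro h
      have h' := Submodule.map_mono (f := e.toLinearMap) h
      rwa [my_symm_map_map] at h'
  set D := (C.filter fun V => V ≤ H).image Φ with hD
  have hcard : D.card = (C.filter fun V => V ≤ H).card :=
    Finset.card_image_of_injOn hinj
  have hcode : IsMultipleCode F (n - 1) k t l D := by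
    constructor
    · intro V' hV'
      simp only [hD, Finset.mem_image, Finset.mem_filter] at hV'
      obtain ⟨V, ⟨hVC, hVH⟩, rfl⟩ := hV'
      have h1 : finrank F (Φ V) = finrank F (V.comap H.subtype) :=
        LinearEquiv.finrank_map_eq e _
      have h2 : finrank F (V.comap H.subtype) = finrank F V :=
        (Submodule.comapSubtypeEquivOfLe hVH).finrank_eq
      rw [h1, h2]
      exact hC.1 V hVC
    · intro T' hT'
      set T : Submodule F (Fin n → F) := (T'.map e.symm.toLinearMap).map H.subtype with hT
      have hTt : finrank F T = t := by
        rw [hT, Submodule.finrank_map_subtype_eq]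
        rw [LinearEquiv.finrank_map_eq e.symm T', hT']
      calc (D.filter fun V' => T' ≤ V').card
          = (((C.filter fun V => V ≤ H).filter fun V => T' ≤ Φ V).image Φ).card := by
            rw [hD, Finset.filter_image]
        _ = ((C.filter fun V => V ≤ H).filter fun V => T' ≤ Φ V).card :=
            Finset.card_image_of_injOn (hinj.mono (by
              intro x hx
              simp only [Finset.coe_filter, Set.mem_setOf_eq, Finset.mem_filter] at hx ⊢
              exact ⟨hx.1.1, hx.1.2⟩))
        _ ≤ (C.filter fun V => T ≤ V).card := by
            apply Finset.card_le_card
            intro V hV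
            simp only [Finset.mem_filter] at hV ⊢
            exact ⟨hV.1.1, (hiff V hV.1.2 T').mp hV.2⟩
        _ ≤ l := hC.2 T hTt
  have hmem : (C.filter fun V => V ≤ H).card ∈
      {m | ∃ C' : Finset (Submodule F (Fin (n - 1) → F)),
        IsMultipleCode F (n - 1) k t l C' ∧ C'.card = m} := ⟨D, hcode, hcard⟩
  exact le_csSup (my_aq_bddAbove _ _ _ _) hmem

end Aux



/-- The Johnson-type bound:
`A_q(n,k,t;l) ≤ ⌊((q^n - 1)/(q^{n-k} - 1)) · A_q(n-1, k, t; l)⌋`. -/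
theorem stmt12 (q : ℕ) (hq : IsPrimePow q) (F : Type) [Field F] [Fintype F]
    (hF : Fintype.card F = q) (n k t l : ℕ)
    (ht1 : 1 ≤ t) (htk : t < k) (hkn : k < n)
    (hl1 : 1 ≤ l) (hl2 : l ≤ gaussBinom q (n - 1 - t) (k - t)) :
    Aq F n k t l ≤ (q ^ n - 1) * Aq F (n - 1) k t l / (q ^ (n - k) - 1) := by
  classical
  subst hF
  have hq2 : 2 ≤ Fintype.card F := Fintype.one_lt_card
  have hfM : finrank F (Fin n → F) = n := by simp
  set q := Fintype.card F with hq'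
  set A' := Aq F (n - 1) k t l with hA'
  have hBpos : 0 < q ^ (n - k) - 1 := by
    have : q ^ 1 ≤ q ^ (n - k) := Nat.pow_le_pow_right (by omega) (by omega)
    simp at this; omega
  refine csSup_le ⟨0, ∅, ⟨by simp, fun T hT => by simp⟩, by simp⟩ ?_
  rintro m ⟨C, hC, rfl⟩
  rw [Nat.le_div_iff_mul_le hBpos]
  set Hyp := Finset.univ.filter fun H : Submodule F (Fin n → F) => finrank F H = n - 1 with hHyp
  set S := ∑ H ∈ Hyp, (C.filter fun V => V ≤ H).card with hS
  have claim1 : C.card * (q ^ (n - k) - 1) = S * (q - 1) := by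
    have e1 : ∀ V ∈ C, (q ^ (n - k) - 1)
        = (Finset.univ.filter fun H : Submodule F (Fin n → F) =>
            finrank F H = n - 1 ∧ V ≤ H).card * (q - 1) := fun V hV =>
      (my_hyps_over n V k (hC.1 V hV) hkn).symm
    have e2 : C.card * (q ^ (n - k) - 1)
        = (∑ V ∈ C, (Finset.univ.filter fun H : Submodule F (Fin n → F) =>
            finrank F H = n - 1 ∧ V ≤ H).card) * (q - 1) := by
      rw [Finset.sum_mul, ← Finset.sum_congr rfl e1, Finset.sum_const, smul_eq_mul]
    rw [e2]
    congr 1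
    have e3 : ∀ V : Submodule F (Fin n → F),
        (Finset.univ.filter fun H : Submodule F (Fin n → F) =>
          finrank F H = n - 1 ∧ V ≤ H) = Hyp.filter fun H => V ≤ H := by
      intro V; rw [hHyp, Finset.filter_filter]
    calc ∑ V ∈ C, (Finset.univ.filter fun H : Submodule F (Fin n → F) =>
            finrank F H = n - 1 ∧ V ≤ H).card
        = ∑ V ∈ C, (Hyp.filter fun H => V ≤ H).card :=
          Finset.sum_congr rfl fun V _ => by rw [e3]
      _ = ∑ V ∈ C, ∑ H ∈ Hyp, if V ≤ H then 1 else 0 :=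
          Finset.sum_congr rfl fun V _ => Finset.card_filter _ _
      _ = ∑ H ∈ Hyp, ∑ V ∈ C, if V ≤ H then 1 else 0 := Finset.sum_comm
      _ = S := by
          rw [hS]
          exact Finset.sum_congr rfl fun H _ => (Finset.card_filter _ _).symm
  have claim2 : S ≤ Hyp.card * A' := by
    rw [hS, ← smul_eq_mul]
    apply Finset.sum_le_card_nsmul
    intro H hH
    simp only [hHyp, Finset.mem_filter, Finset.mem_univ, true_and] at hH
    exact my_restrict_le n k t l (by omega) C hC H hH
  have claim3 : Hyp.card * (q - 1) = q ^ n - 1 := by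
    have := my_hyps_count (F := F) (Fin n → F) (by omega)
    rwa [hfM] at this
  calc C.card * (q ^ (n - k) - 1) = S * (q - 1) := claim1
    _ ≤ Hyp.card * A' * (q - 1) := Nat.mul_le_mul_right _ claim2
    _ = (Hyp.card * (q - 1)) * A' := by ring
    _ = (q ^ n - 1) * A' := by rw [claim3]
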